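/- For the swallow-tail-type surface M₂ = {(u₁,u₂,u₃) : |u₁| = (√2/(3√3))(√(u₂²+12u₃)+2u₂)√(√(u₂²+12u₃)−u₂), where the radicand conditions hold}, every point of M₂ satisfies: the quartic x⁴ + u₂x² + u₁x + u₃ has global minimum value 0. -/
import Mathlib


/-- On the swallow-tail type surface `M₂`, i.e. when
`|u₁| = (√2/(3√3))(√(u₂²+12u₃)+2u₂)√(√(u₂²+12u₃)−u₂)` with the radicand
conditions, the quartic `x⁴ + u₂x² + u₁x + u₃` has global minimum value `0`. -/
theorem stmt_16 (u₁ u₂ u₃ : ℝ)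
    (hrad : 0 ≤ u₂ ^ 2 + 12 * u₃)
    (h1 : Real.sqrt (u₂ ^ 2 + 12 * u₃) > -2 * u₂)
    (h2 : Real.sqrt (u₂ ^ 2 + 12 * u₃) ≥ u₂)
    (hu₁ : |u₁| = Real.sqrt 2 / (3 * Real.sqrt 3) *
        (Real.sqrt (u₂ ^ 2 + 12 * u₃) + 2 * u₂) *
        Real.sqrt (Real.sqrt (u₂ ^ 2 + 12 * u₃) - u₂)) :
    (⨅ x : ℝ, (x ^ 4 + u₂ * x ^ 2 + u₁ * x + u₃)) = 0 := by
  set s := Real.sqrt (u₂ ^ 2 + 12 * u₃) with hs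
  have hs2 : s ^ 2 = u₂ ^ 2 + 12 * u₃ := Real.sq_sqrt hrad
  have hsa : 0 ≤ (s - u₂) / 6 := by linarith
  set a₀ := Real.sqrt ((s - u₂) / 6) with ha₀
  have ha₀2 : a₀ ^ 2 = (s - u₂) / 6 := Real.sq_sqrt hsa
  have ha₀nn : 0 ≤ a₀ := Real.sqrt_nonneg _
  set c := (s + u₂) / 2 with hc
  have hca : c - a₀ ^ 2 = (s + 2 * u₂) / 3 := by rw [ha₀2]; ring
  have hcapos : 0 < c - a₀ ^ 2 := by rw [hca]; linarith
  have hu₃ : u₃ = a₀ ^ 2 * c := by rw [ha₀2]; nlinarith [hs2]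
  have hu₂ : u₂ = c - 3 * a₀ ^ 2 := by rw [ha₀2]; ring
  have h2' : 0 ≤ s - u₂ := by linarith
  have habs : |u₁| = 2 * a₀ * (c - a₀ ^ 2) := by
    have hnn : 0 ≤ 2 * a₀ * (c - a₀ ^ 2) :=
      mul_nonneg (by linarith) hcapos.le
    have e1 : (Real.sqrt 2 / (3 * Real.sqrt 3) * (s + 2 * u₂) * Real.sqrt (s - u₂)) ^ 2
        = 2 / 27 * (s + 2 * u₂) ^ 2 * (s - u₂) := by
      rw [mul_pow, mul_pow, div_pow, Real.sq_sqrt (by norm_num : (0:ℝ) ≤ 2),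
        Real.sq_sqrt h2', mul_pow, Real.sq_sqrt (by norm_num : (0:ℝ) ≤ 3)]
      ring
    have e2 : (2 * a₀ * (c - a₀ ^ 2)) ^ 2 = 2 / 27 * (s + 2 * u₂) ^ 2 * (s - u₂) := by
      rw [hca, mul_pow, mul_pow, ha₀2]; ring
    calc |u₁| = Real.sqrt (|u₁| ^ 2) := (Real.sqrt_sq (abs_nonneg _)).symm
      _ = Real.sqrt ((2 * a₀ * (c - a₀ ^ 2)) ^ 2) := by rw [hu₁, e1, e2]
      _ = 2 * a₀ * (c - a₀ ^ 2) := Real.sqrt_sq hnn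
  have hex : ∃ a : ℝ, u₁ = 2 * a * (a₀ ^ 2 - c) ∧ a ^ 2 = a₀ ^ 2 := by
    rcases abs_cases u₁ with ⟨he, _⟩ | ⟨he, _⟩
    · exact ⟨-a₀, by rw [← he, habs]; ring, by ring⟩
    · exact ⟨a₀, by nlinarith [habs, he], rfl⟩
  obtain ⟨a, hA, hB⟩ := hex
  have key : ∀ x : ℝ, x ^ 4 + u₂ * x ^ 2 + u₁ * x + u₃
      = (x - a) ^ 2 * ((x + a) ^ 2 + (c - a₀ ^ 2)) := by
    intro x
    linear_combination x ^ 2 * hu₂ + x * hA + hu₃ + (2 * x ^ 2 - c - a ^ 2) * hB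
  have hnonneg : ∀ x : ℝ, 0 ≤ x ^ 4 + u₂ * x ^ 2 + u₁ * x + u₃ := by
    intro x
    rw [key x]
    have : 0 < (x + a) ^ 2 + (c - a₀ ^ 2) := by positivity
    positivity
  have hzero : a ^ 4 + u₂ * a ^ 2 + u₁ * a + u₃ = 0 := by
    rw [key a]; ring
  have hbdd : BddBelow (Set.range fun x : ℝ => x ^ 4 + u₂ * x ^ 2 + u₁ * x + u₃) :=
    ⟨0, by rintro y ⟨x, rfl⟩; exact hnonneg x⟩
  apply le_antisymm
  · exact (ciInf_le hbdd a).trans_eq hzero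
  · exact le_ciInf hnonneg
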